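/- The generating function G(x,a,b) counting plane trees by edges (x), leaves (a), and internal nodes (b) has the closed form G(x,a,b) = [1 + (2-a-b)x - sqrt((1+(2-a-b)x)^2 - 4x(1-(b-1)x))] / (2x), and G*(x,a,b) = [1 + (a-b)x - sqrt((1+(2-a-b)x)^2 - 4x(1-(b-1)x))] / (2(1-(b-1)x)). -/

import Mathlib

inductive PlaneTree : Type
  | node : List PlaneTree → PlaneTree

namespace PlaneTree

def edges : PlaneTree → ℕ
  | node ts => (ts.attach.map (fun t => edges t.1)).sum + ts.length
decreasing_by have := List.sizeOf_lt_of_mem t.2; simp [PlaneTree.node.sizeOf_spec]; omega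

def leafAux : PlaneTree → ℕ
  | node ts => (if ts.length = 0 then 1 else 0) + (ts.attach.map (fun t => leafAux t.1)).sum
decreasing_by have := List.sizeOf_lt_of_mem t.2; simp [PlaneTree.node.sizeOf_spec]; omega

def internalAux : PlaneTree → ℕ
  | node ts => (if ts.length = 1 then 1 else 0) + (ts.attach.map (fun t => internalAux t.1)).sum
decreasing_by have := List.sizeOf_lt_of_mem t.2; simp [PlaneTree.node.sizeOf_spec]; omega

/-- number of leaves: non-root vertices of down degree 0 -/
def leaves : PlaneTree → ℕ
  | node ts => (ts.map leafAux).sum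

/-- number of internal nodes: non-root vertices of down degree 1 -/
def internals : PlaneTree → ℕ
  | node ts => (ts.map internalAux).sum

def rootDegree : PlaneTree → ℕ
  | node ts => ts.length

end PlaneTree

/-- The `n`-th coefficient of the trivariate generating function `G(x,a,b)`
counting plane trees by edges, leaves (`a = X 0`) and internal nodes (`b = X 1`). -/
noncomputable def Gcoef (n : ℕ) : MvPolynomial (Fin 2) ℚ :=
  ∑ᶠ T : {T : PlaneTree // T.edges = n},
    (MvPolynomial.X 0 : MvPolynomial (Fin 2) ℚ) ^ T.1.leaves *
      MvPolynomial.X 1 ^ T.1.internals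

/-- The same, restricted to plane trees with root degree 1. -/
noncomputable def GstarCoef (n : ℕ) : MvPolynomial (Fin 2) ℚ :=
  ∑ᶠ T : {T : PlaneTree // T.edges = n ∧ T.rootDegree = 1},
    (MvPolynomial.X 0 : MvPolynomial (Fin 2) ℚ) ^ T.1.leaves *
      MvPolynomial.X 1 ^ T.1.internals

namespace PlaneTree

lemma edges_node (ts : List PlaneTree) :
    edges (node ts) = (ts.map edges).sum + ts.length := by
  rw [edges]; rw [List.attach_map_val]

lemma leafAux_node (ts : List PlaneTree) :
    leafAux (node ts) = (if ts.length = 0 then 1 else 0) + (ts.map leafAux).sum := by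
  rw [leafAux]; rw [List.attach_map_val]

lemma internalAux_node (ts : List PlaneTree) :
    internalAux (node ts) = (if ts.length = 1 then 1 else 0) + (ts.map internalAux).sum := by
  rw [internalAux]; rw [List.attach_map_val]

def cons (s : PlaneTree) : PlaneTree → PlaneTree
  | node ts => node (s :: ts)

lemma edges_cons (s T : PlaneTree) : (cons s T).edges = s.edges + T.edges + 1 := by
  cases T with
  | node ts => simp [cons, edges_node]; omega

lemma leaves_cons (s T : PlaneTree) : (cons s T).leaves = s.leafAux + T.leaves := by
  cases T with
  | node ts => simp [cons, leaves]

lemma internals_cons (s T : PlaneTree) : (cons s T).internals = s.internalAux + T.internals := by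
  cases T with
  | node ts => simp [cons, internals]

lemma edges_eq_zero {T : PlaneTree} (h : T.edges = 0) : T = node [] := by
  cases T with
  | node ts =>
    rw [edges_node] at h
    have : ts.length = 0 := by omega
    rw [List.length_eq_zero_iff] at this
    subst this; rfl

lemma edges_nil : edges (node []) = 0 := by simp [edges_node]

lemma leaves_nil : leaves (node []) = 0 := by simp [leaves]
lemma internals_nil : internals (node []) = 0 := by simp [internals]
lemma rootDegree_nil : rootDegree (node []) = 0 := rfl

lemma edges_single (t : PlaneTree) : edges (node [t]) = t.edges + 1 := by
  simp [edges_node]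
lemma leaves_single (t : PlaneTree) : leaves (node [t]) = t.leafAux := by simp [leaves]
lemma internals_single (t : PlaneTree) : internals (node [t]) = t.internalAux := by
  simp [internals]

/-- finiteness -/
lemma finite_edges_le (n : ℕ) : {T : PlaneTree | T.edges ≤ n}.Finite := by
  induction n with
  | zero =>
    apply Set.Finite.subset (Set.finite_singleton (node []))
    intro T hT
    simp only [Set.mem_setOf_eq, Nat.le_zero] at hT
    simp [edges_eq_zero hT]
  | succ n ih =>
    apply Set.Finite.subset
      (Set.Finite.insert (node [])
        (Set.Finite.image (fun p => cons p.1 p.2) (Set.Finite.prod ih ih)))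
    intro T hT
    simp only [Set.mem_setOf_eq] at hT
    cases T with
    | node ts =>
      cases ts with
      | nil => exact Set.mem_insert _ _
      | cons t ts' =>
        apply Set.mem_insert_of_mem
        refine ⟨(t, node ts'), ⟨?_, ?_⟩, rfl⟩
        · have := edges_cons t (node ts')
          simp only [cons] at this
          simp only [Set.mem_setOf_eq]
          omega
        · have := edges_cons t (node ts')
          simp only [cons] at this
          simp only [Set.mem_setOf_eq]
          omega

instance finite_edges_eq (n : ℕ) : Finite {T : PlaneTree // T.edges = n} := by
  have : {T : PlaneTree | T.edges = n}.Finite := by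
    apply Set.Finite.subset (finite_edges_le n)
    intro T hT; simp_all [Set.mem_setOf_eq]
  exact this.to_subtype

end PlaneTree

namespace PlaneTree

def splitEquiv (n : ℕ) :
    {T : PlaneTree // T.edges = n + 1} ≃
      {q : PlaneTree × PlaneTree // q.1.edges + q.2.edges = n} where
  toFun T :=
    match T with
    | ⟨node [], h⟩ => absurd h (by simp [edges_nil])
    | ⟨node (t :: ts), h⟩ =>
        ⟨(t, node ts), by
          have := edges_cons t (node ts)
          simp only [cons] at this
          show t.edges + (node ts).edges = n
          omega⟩
  invFun q := ⟨cons q.1.1 q.1.2, by rw [edges_cons]; omega⟩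
  left_inv := by
    rintro ⟨T, hT⟩
    cases T with
    | node ts =>
      cases ts with
      | nil => exact absurd hT (by simp [edges_nil])
      | cons t ts' => rfl
  right_inv := by
    rintro ⟨⟨t, T⟩, h⟩
    cases T with
    | node ts => rfl

def sigmaEquiv (n : ℕ) :
    {q : PlaneTree × PlaneTree // q.1.edges + q.2.edges = n} ≃
      Σ p : (Finset.HasAntidiagonal.antidiagonal n : Finset (ℕ × ℕ)),
        {s : PlaneTree // s.edges = (p : ℕ × ℕ).1} ×
          {T : PlaneTree // T.edges = (p : ℕ × ℕ).2} where
  toFun q := ⟨⟨(q.1.1.edges, q.1.2.edges), by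
      simp [Finset.HasAntidiagonal.mem_antidiagonal, q.2]⟩, ⟨q.1.1, rfl⟩, ⟨q.1.2, rfl⟩⟩
  invFun x := ⟨(x.2.1.1, x.2.2.1), by
      have h := Finset.HasAntidiagonal.mem_antidiagonal.1 x.1.2
      rw [x.2.1.2, x.2.2.2]; exact h⟩
  left_inv := by rintro ⟨⟨s, T⟩, h⟩; rfl
  right_inv := by
    rintro ⟨⟨⟨i, j⟩, hp⟩, ⟨s, hs⟩, ⟨T, hT⟩⟩
    have hs' : s.edges = i := hs
    have hT' : T.edges = j := hT
    subst hs'; subst hT'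
    rfl

instance finite_pairs (n : ℕ) :
    Finite {q : PlaneTree × PlaneTree // q.1.edges + q.2.edges = n} :=
  Finite.of_equiv _ (splitEquiv n)

open MvPolynomial in
lemma key_sum (u v w : PlaneTree → MvPolynomial (Fin 2) ℚ)
    (hw : ∀ s T, w (cons s T) = u s * v T) (n : ℕ) :
    ∑ᶠ T : {T : PlaneTree // T.edges = n + 1}, w T.1
      = ∑ p ∈ Finset.HasAntidiagonal.antidiagonal n,
          (∑ᶠ s : {s : PlaneTree // s.edges = p.1}, u s.1) *
          (∑ᶠ T : {T : PlaneTree // T.edges = p.2}, v T.1) := by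
  classical
  haveI : ∀ m, Fintype {T : PlaneTree // T.edges = m} := fun m => Fintype.ofFinite _
  haveI : Fintype {q : PlaneTree × PlaneTree // q.1.edges + q.2.edges = n} :=
    Fintype.ofFinite _
  rw [finsum_eq_sum_of_fintype]
  rw [Fintype.sum_equiv (splitEquiv n)
    (fun T => w T.1) (fun q => u q.1.1 * v q.1.2) ?_]
  · rw [Fintype.sum_equiv (sigmaEquiv n)
      (fun q => u q.1.1 * v q.1.2)
      (fun x => u x.2.1.1 * v x.2.2.1) (fun q => rfl)]
    rw [← Finset.univ_sigma_univ, Finset.sum_sigma]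
    rw [← Finset.sum_coe_sort (Finset.HasAntidiagonal.antidiagonal n)]
    refine Finset.sum_congr rfl fun p _ => ?_
    rw [Fintype.sum_prod_type, finsum_eq_sum_of_fintype, finsum_eq_sum_of_fintype,
      Finset.sum_mul_sum]
  · rintro ⟨T, hT⟩
    cases T with
    | node ts =>
      cases ts with
      | nil => exact absurd hT (by simp [edges_nil])
      | cons t ts' =>
        exact hw t (node ts')

end PlaneTree

namespace PlaneTree

lemma rootDegree_eq_zero {T : PlaneTree} (h : T.rootDegree = 0) : T = node [] := by
  cases T with
  | node ts =>
    simp only [rootDegree] at h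
    rw [List.length_eq_zero_iff] at h
    subst h; rfl

instance unique_edges_zero : Unique {T : PlaneTree // T.edges = 0} where
  default := ⟨node [], edges_nil⟩
  uniq := fun ⟨T, hT⟩ => Subtype.ext (edges_eq_zero hT)

instance isEmpty_star_zero : IsEmpty {T : PlaneTree // T.edges = 0 ∧ T.rootDegree = 1} := by
  constructor
  rintro ⟨T, h1, h2⟩
  rw [edges_eq_zero h1] at h2
  simp [rootDegree] at h2

def singleEquiv (n : ℕ) :
    {T : PlaneTree // T.edges = n + 1 ∧ T.rootDegree = 1} ≃ {t : PlaneTree // t.edges = n} where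
  toFun T :=
    match T with
    | ⟨node [], h⟩ => absurd h.2 (by simp [rootDegree])
    | ⟨node [t], h⟩ => ⟨t, by have := h.1; rw [edges_single] at this; omega⟩
    | ⟨node (t :: s :: ts), h⟩ => absurd h.2 (by simp [rootDegree])
  invFun t := ⟨node [t.1], by rw [edges_single, t.2]; exact ⟨rfl, rfl⟩⟩
  left_inv := by
    rintro ⟨T, h1, h2⟩
    cases T with
    | node ts =>
      match ts, h2 with
      | [t], _ => rfl
  right_inv := by rintro ⟨t, ht⟩; rfl

end PlaneTree

noncomputable def Hcoef (n : ℕ) : MvPolynomial (Fin 2) ℚ :=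
  ∑ᶠ t : {t : PlaneTree // t.edges = n},
    (MvPolynomial.X 0 : MvPolynomial (Fin 2) ℚ) ^ t.1.leafAux *
      MvPolynomial.X 1 ^ t.1.internalAux

noncomputable def Kcoef (n : ℕ) : MvPolynomial (Fin 2) ℚ :=
  ∑ᶠ T : {T : PlaneTree // T.edges = n},
    ((MvPolynomial.X 0 : MvPolynomial (Fin 2) ℚ) ^ T.1.leaves *
      MvPolynomial.X 1 ^ T.1.internals) *
      (if T.1.rootDegree = 0 then MvPolynomial.X 1 else 1)

open PlaneTree MvPolynomial

lemma Gcoef_zero : Gcoef 0 = 1 := by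
  rw [Gcoef, finsum_unique]
  show X 0 ^ (node []).leaves * X 1 ^ (node []).internals = 1
  simp [leaves_nil, internals_nil]

lemma Hcoef_zero : Hcoef 0 = X 0 := by
  rw [Hcoef, finsum_unique]
  show X 0 ^ (node []).leafAux * X 1 ^ (node []).internalAux = X 0
  have h1 : leafAux (node []) = 1 := by simp [leafAux_node]
  have h2 : internalAux (node []) = 0 := by simp [internalAux_node]
  rw [h1, h2]
  simp

lemma Kcoef_zero : Kcoef 0 = X 1 := by
  rw [Kcoef, finsum_unique]
  show (X 0 ^ (node []).leaves * X 1 ^ (node []).internals) *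
      (if (node []).rootDegree = 0 then X 1 else 1) = X 1
  simp [leaves_nil, internals_nil, rootDegree_nil]

lemma Kcoef_succ (n : ℕ) : Kcoef (n + 1) = Gcoef (n + 1) := by
  rw [Kcoef, Gcoef]
  apply finsum_congr
  rintro ⟨T, hT⟩
  have : T.rootDegree ≠ 0 := by
    intro h
    rw [rootDegree_eq_zero h, edges_nil] at hT
    omega
  simp [this]

lemma GstarCoef_zero : GstarCoef 0 = 0 := by
  rw [GstarCoef]
  exact finsum_of_isEmpty _

instance finite_star (n : ℕ) : Finite {T : PlaneTree // T.edges = n ∧ T.rootDegree = 1} :=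
  Finite.of_injective (fun T => (⟨T.1, T.2.1⟩ : {T : PlaneTree // T.edges = n}))
    (by rintro ⟨T, h⟩ ⟨T', h'⟩ hh; simpa [Subtype.ext_iff] using hh)

lemma GstarCoef_succ (n : ℕ) : GstarCoef (n + 1) = Hcoef n := by
  classical
  haveI : Fintype {t : PlaneTree // t.edges = n} := Fintype.ofFinite _
  haveI : Fintype {T : PlaneTree // T.edges = n + 1 ∧ T.rootDegree = 1} :=
    Fintype.ofFinite _
  rw [GstarCoef, Hcoef, finsum_eq_sum_of_fintype, finsum_eq_sum_of_fintype]
  apply Fintype.sum_equiv (singleEquiv n)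
  rintro ⟨T, h1, h2⟩
  cases T with
  | node ts =>
    match ts, h2 with
    | [t], _ =>
      show X 0 ^ (node [t]).leaves * X 1 ^ (node [t]).internals
        = X 0 ^ t.leafAux * X 1 ^ t.internalAux
      rw [leaves_single, internals_single]

lemma Gcoef_succ (n : ℕ) :
    Gcoef (n + 1) = ∑ p ∈ Finset.HasAntidiagonal.antidiagonal n, Hcoef p.1 * Gcoef p.2 := by
  simp only [Gcoef, Hcoef]
  exact key_sum (fun s => X 0 ^ s.leafAux * X 1 ^ s.internalAux)
    (fun T => X 0 ^ T.leaves * X 1 ^ T.internals)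
    (fun T => X 0 ^ T.leaves * X 1 ^ T.internals)
    (fun s T => by
      rw [leaves_cons, internals_cons, pow_add, pow_add]; ring) n

lemma Hcoef_succ (n : ℕ) :
    Hcoef (n + 1) = ∑ p ∈ Finset.HasAntidiagonal.antidiagonal n, Hcoef p.1 * Kcoef p.2 := by
  simp only [Hcoef, Kcoef]
  refine key_sum (fun s => X 0 ^ s.leafAux * X 1 ^ s.internalAux)
    (fun T => (X 0 ^ T.leaves * X 1 ^ T.internals) * (if T.rootDegree = 0 then X 1 else 1))
    (fun t => X 0 ^ t.leafAux * X 1 ^ t.internalAux)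
    (fun s T => ?_) n
  cases T with
  | node ts =>
    have hc : cons s (node ts) = node (s :: ts) := rfl
    rw [hc, leafAux_node, internalAux_node]
    simp only [leaves, internals, rootDegree, List.length_cons, List.map_cons, List.sum_cons]
    cases ts with
    | nil =>
      simp [pow_add]
      ring
    | cons t' ts' =>
      have h1 : ¬ (t' :: ts').length + 1 = 1 := by simp
      have h2 : ¬ (t' :: ts').length = 0 := by simp
      simp only [if_neg h1, if_neg h2, List.length_cons]
      simp [pow_add]
      ring

lemma series_G : PowerSeries.mk Gcoef
    = 1 + PowerSeries.X * (PowerSeries.mk Hcoef * PowerSeries.mk Gcoef) := by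
  ext n
  cases n with
  | zero =>
    simp [PowerSeries.coeff_zero_eq_constantCoeff, Gcoef_zero]
  | succ n =>
    rw [map_add, PowerSeries.coeff_succ_X_mul, PowerSeries.coeff_mk, PowerSeries.coeff_one,
      PowerSeries.coeff_mul, Gcoef_succ]
    simp [PowerSeries.coeff_mk]

lemma series_H : PowerSeries.mk Hcoef
    = PowerSeries.C (X 0)
      + PowerSeries.X * (PowerSeries.mk Hcoef * PowerSeries.mk Kcoef) := by
  ext n
  cases n with
  | zero =>
    simp [PowerSeries.coeff_zero_eq_constantCoeff, Hcoef_zero]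
  | succ n =>
    rw [map_add, PowerSeries.coeff_succ_X_mul, PowerSeries.coeff_mk, PowerSeries.coeff_C,
      PowerSeries.coeff_mul, Hcoef_succ]
    simp [PowerSeries.coeff_mk]

lemma series_K : PowerSeries.mk Kcoef
    = PowerSeries.mk Gcoef - 1 + PowerSeries.C (X 1) := by
  ext n
  cases n with
  | zero =>
    simp [PowerSeries.coeff_zero_eq_constantCoeff, Kcoef_zero, Gcoef_zero]
  | succ n =>
    rw [map_add, map_sub, PowerSeries.coeff_mk, PowerSeries.coeff_mk, PowerSeries.coeff_C,
      PowerSeries.coeff_one, Kcoef_succ]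
    simp

lemma series_Gstar : PowerSeries.mk GstarCoef = PowerSeries.X * PowerSeries.mk Hcoef := by
  ext n
  cases n with
  | zero =>
    simp [PowerSeries.coeff_zero_eq_constantCoeff, GstarCoef_zero]
  | succ n =>
    rw [PowerSeries.coeff_succ_X_mul, PowerSeries.coeff_mk, PowerSeries.coeff_mk,
      GstarCoef_succ]

section Main

local notation "R" => MvPolynomial (Fin 2) ℚ

noncomputable abbrev Gs : PowerSeries R := PowerSeries.mk Gcoef
noncomputable abbrev Hs : PowerSeries R := PowerSeries.mk Hcoef
noncomputable abbrev aa : PowerSeries R := PowerSeries.C (X 0)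
noncomputable abbrev bb : PowerSeries R := PowerSeries.C (X 1)
noncomputable abbrev xx : PowerSeries R := PowerSeries.X

lemma series_H' : Hs = aa + xx * (Hs * (Gs - 1 + bb)) := by
  rw [← series_K]; exact series_H

lemma main1 :
    (1 + (2 - aa - bb) * xx - 2 * xx * Gs) ^ 2
      = (1 + (2 - aa - bb) * xx) ^ 2 - 4 * xx * (1 - (bb - 1) * xx) := by
  have hG := series_G
  have hH := series_H'
  linear_combination (-4*xx*(1 - xx*(Gs - 1 + bb))) * hG + (-4*xx*(xx*Gs)) * hH

lemma main4 :
    2 * (1 - (bb - 1) * xx) * PowerSeries.mk GstarCoef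
      = 1 + (aa - bb) * xx - (1 + (2 - aa - bb) * xx - 2 * xx * Gs) := by
  have hG := series_G
  have hH := series_H'
  have hGs := series_Gstar
  linear_combination (2*(1 + (1 - bb)*xx)) * hGs + (2*xx) * hH - (2*xx) * hG

lemma main2 :
    PowerSeries.constantCoeff (1 + (2 - aa - bb) * xx - 2 * xx * Gs) = 1 := by
  simp [map_add, map_sub, map_mul, PowerSeries.constantCoeff_X]

end Main


/-- Closed forms
`G = (1 + (2-a-b)x - √Ψ)/(2x)` and `G* = (1 + (a-b)x - √Ψ)/(2(1-(b-1)x))`,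
where `Ψ = (1+(2-a-b)x)² - 4x(1-(b-1)x)` and `√Ψ` is the formal power series
square root of `Ψ` with constant term `1`; stated denominator-free. -/
theorem G_closed_form :
    letI R := MvPolynomial (Fin 2) ℚ
    letI G : PowerSeries R := PowerSeries.mk Gcoef
    letI Gstar : PowerSeries R := PowerSeries.mk GstarCoef
    letI a : PowerSeries R := PowerSeries.C (MvPolynomial.X 0)
    letI b : PowerSeries R := PowerSeries.C (MvPolynomial.X 1)
    letI x : PowerSeries R := PowerSeries.X
    ∃ S : PowerSeries R,
      S ^ 2 = (1 + (2 - a - b) * x) ^ 2 - 4 * x * (1 - (b - 1) * x) ∧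
      PowerSeries.constantCoeff S = 1 ∧
      2 * x * G = 1 + (2 - a - b) * x - S ∧
      2 * (1 - (b - 1) * x) * Gstar = 1 + (a - b) * x - S := by
  exact ⟨1 + (2 - aa - bb) * xx - 2 * xx * Gs, main1, main2, by ring, main4⟩
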